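/- arXiv:1711.05975 — 2 statements merged into one kernel-verified Lean document; each statement's English description precedes it below -/
import Mathlib

section
/- Consider a finite directed graph D on vertex set X ∪ {u}, where u is a distinguished input vertex. Let B be the bipartite graph with left vertices X' = {x' : x ∈ X}, right vertices X ∪ {u}, and an edge (y', z) whenever D has a directed edge from z to y, for z ∈ X ∪ {u}. Suppose M is a perfect matching of B (saturating X') that contains an edge (p', u) for some p ∈ X. Then the unique right vertex of X ∪ {u} not covered by M is reachable in D from u along directed edges whose reversals correspond to edges of M. -/
/-- `M` is a matching: no two edges share a left or right endpoint. -/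
def IsMatching {V W : Type*} (M : Finset (V × W)) : Prop :=
  (∀ e ∈ M, ∀ f ∈ M, (e : V × W).1 = (f : V × W).1 → e = f) ∧
  (∀ e ∈ M, ∀ f ∈ M, (e : V × W).2 = (f : V × W).2 → e = f)

/-- Digraph `D` on `X ⊕ {u}`; bipartite graph has left vertices `X'` (a copy of `X`), right
vertices `X ⊕ {u}` and an edge `(y', z)` exactly when `D` has an edge `z → y`.  If `M` is a
perfect matching saturating the left side containing an edge `(p', u)`, then the unique
right vertex uncovered by `M` is reachable from `u` along directed edges whose reversals are
edges of `M`. -/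
theorem stmt2 {X : Type*} [Fintype X] [DecidableEq X]
    (D : (X ⊕ Unit) → (X ⊕ Unit) → Prop)
    (M : Finset (X × (X ⊕ Unit)))
    (hedge : ∀ e ∈ M, D (e : X × (X ⊕ Unit)).2 (Sum.inl (e : X × (X ⊕ Unit)).1))
    (hM : IsMatching M)
    (hsat : M.image Prod.fst = Finset.univ)
    (p : X) (hp : (p, Sum.inr ()) ∈ M)
    (w : X ⊕ Unit) (hw : ∀ e ∈ M, (e : X × (X ⊕ Unit)).2 ≠ w) :
    Relation.ReflTransGen
      (fun z y => ∃ x : X, y = Sum.inl x ∧ (x, z) ∈ M) (Sum.inr ()) w := by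
  classical
  set R : (X ⊕ Unit) → (X ⊕ Unit) → Prop :=
    fun z y => ∃ x : X, y = Sum.inl x ∧ (x, z) ∈ M with hR
  -- the matching function
  have hsat' : ∀ x : X, ∃ z, (x, z) ∈ M := by
    intro x
    have hx : x ∈ M.image Prod.fst := by rw [hsat]; exact Finset.mem_univ x
    obtain ⟨e, he, hfe⟩ := Finset.mem_image.mp hx
    refine ⟨e.2, ?_⟩
    rw [← hfe]
    simpa using he
  set m : X → (X ⊕ Unit) := fun x => (hsat' x).choose with hmdef
  have hm : ∀ x, (x, m x) ∈ M := fun x => (hsat' x).choose_spec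
  have minj : Function.Injective m := by
    intro a b h
    have := hM.2 (a, m a) (hm a) (b, m b) (hm b) h
    exact congrArg Prod.fst this
  -- every vertex other than w is covered by m
  have hcov : ∀ z : X ⊕ Unit, z ≠ w → ∃ x, m x = z := by
    by_contra h
    push_neg at h
    obtain ⟨z, hzw, hz⟩ := h
    have hwI : w ∉ Finset.univ.image m := by
      simp only [Finset.mem_image]
      rintro ⟨x, -, hx⟩
      exact hw (x, m x) (hm x) hx
    have hzI : z ∉ Finset.univ.image m := by
      simp only [Finset.mem_image]
      rintro ⟨x, -, hx⟩
      exact hz x hx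
    have h1 : (Finset.univ.image m).card = Fintype.card X := by
      rw [Finset.card_image_of_injective _ minj, Finset.card_univ]
    have hsub : insert w (insert z (Finset.univ.image m)) ⊆ Finset.univ :=
      Finset.subset_univ _
    have h2 := Finset.card_le_card hsub
    rw [Finset.card_insert_of_notMem (by simp only [Finset.mem_insert]; push_neg; exact ⟨Ne.symm hzw, hwI⟩),
        Finset.card_insert_of_notMem hzI, h1, Finset.card_univ] at h2
    simp only [Fintype.card_sum, Fintype.card_unit] at h2
    omega
  by_contra hws
  -- the reachable set
  set S : Finset (X ⊕ Unit) :=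
    Finset.univ.filter (fun z => Relation.ReflTransGen R (Sum.inr ()) z) with hS
  have huS : Sum.inr () ∈ S := by
    simp only [hS, Finset.mem_filter, Finset.mem_univ, true_and]
    exact Relation.ReflTransGen.refl
  have hwS : w ∉ S := by
    simp only [hS, Finset.mem_filter, Finset.mem_univ, true_and]
    exact hws
  -- the predecessor function
  set f : (X ⊕ Unit) → X := fun z => if h : ∃ x, m x = z then h.choose else p with hf
  have key : ∀ z ∈ S, Sum.inl (f z) ∈ S ∧ m (f z) = z := by
    intro z hz
    have hzw : z ≠ w := fun h => hwS (h ▸ hz)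
    have hex : ∃ x, m x = z := hcov z hzw
    have hfz : m (f z) = z := by
      simp only [hf, dif_pos hex]
      exact hex.choose_spec
    refine ⟨?_, hfz⟩
    simp only [hS, Finset.mem_filter, Finset.mem_univ, true_and] at hz ⊢
    exact hz.tail ⟨f z, rfl, by have h := hm (f z); rwa [hfz] at h⟩
  -- injection S → S.erase (inr ())
  have hmaps : ∀ z ∈ S, Sum.inl (f z) ∈ S.erase (Sum.inr ()) := by
    intro z hz
    exact Finset.mem_erase.mpr ⟨by simp, (key z hz).1⟩
  have hinj : Set.InjOn (fun z => (Sum.inl (f z) : X ⊕ Unit)) S := by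
    intro a ha b hb hab
    have : f a = f b := by simpa using hab
    rw [← (key a ha).2, ← (key b hb).2, this]
  have hcard := Finset.card_le_card_of_injOn _ hmaps hinj
  rw [Finset.card_erase_of_mem huS] at hcard
  have hpos : 0 < S.card := Finset.card_pos.mpr ⟨_, huS⟩
  omega
end

section
/- Let D be a finite digraph that is the disjoint union of k digraphs D₁,…,D_k with an input vertex u, and suppose at least one vertex v₀ is reachable from u. Let N₁,…,N_q be the non-top-linked SCCs of the D_i's not reachable from u, and assume every pair of vertices in distinct subsystems may be joined by an added interconnection edge, and each N_j lies in a subsystem different from that of some reachable vertex. If additionally every non-top-linked SCC of each D_i either is one of the N_j or is reachable from u, then adding exactly q interconnection edges, one from a reachable vertex into each N_j (processed in a suitable order), makes every vertex of D reachable from u. -/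
/-- A strongly connected component: a nonempty, mutually reachable, maximal vertex set. -/
def IsSCC {V : Type*} (D : V → V → Prop) (s : Set V) : Prop :=
  s.Nonempty ∧ (∀ v ∈ s, ∀ w ∈ s, Relation.ReflTransGen D v w) ∧
    ∀ t : Set V, s ⊆ t → (∀ v ∈ t, ∀ w ∈ t, Relation.ReflTransGen D v w) → t = s

/-- Two SCCs sharing a point are equal. -/
lemma IsSCC.eq_of_mem {V : Type*} {D : V → V → Prop} {s t : Set V}
    (hs : IsSCC D s) (ht : IsSCC D t) {p : V} (hps : p ∈ s) (hpt : p ∈ t) : s = t := by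
  obtain ⟨-, hsm, hsmax⟩ := hs
  obtain ⟨-, htm, htmax⟩ := ht
  have hmut : ∀ v ∈ s ∪ t, ∀ w ∈ s ∪ t, Relation.ReflTransGen D v w := by
    rintro v hv w hw
    have h1 : Relation.ReflTransGen D v p := by
      rcases hv with hv | hv
      · exact hsm v hv p hps
      · exact htm v hv p hpt
    have h2 : Relation.ReflTransGen D p w := by
      rcases hw with hw | hw
      · exact hsm p hps w hw
      · exact htm p hpt w hw
    exact h1.trans h2
  have e1 := hsmax (s ∪ t) Set.subset_union_left hmut
  have e2 := htmax (s ∪ t) Set.subset_union_right hmut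
  exact e1.symm.trans e2

/-- Every vertex of a finite digraph is reachable from some non-top-linked SCC. -/
lemma exists_source {X : Type*} [Fintype X] (Dx : X → X → Prop) (x : X) :
    ∃ s : Set X, IsSCC Dx s ∧ (∀ a ∉ s, ∀ z ∈ s, ¬ Dx a z) ∧
      ∃ z ∈ s, Relation.ReflTransGen Dx z x := by
  classical
  set r : X → X → Prop := fun a c =>
    Relation.ReflTransGen Dx a c ∧ ¬ Relation.ReflTransGen Dx c a with hr
  have : IsTrans X r := ⟨by
    rintro a b' c ⟨h1, h2⟩ ⟨h3, h4⟩
    exact ⟨h1.trans h3, fun h => h2 (h3.trans h)⟩⟩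
  have : IsIrrefl X r := ⟨fun a ⟨h1, h2⟩ => h2 h1⟩
  have hwf : WellFounded r := Finite.wellFounded_of_trans_of_irrefl r
  obtain ⟨y, hyS, hymin⟩ := hwf.has_min {z | Relation.ReflTransGen Dx z x}
    ⟨x, Relation.ReflTransGen.refl⟩
  refine ⟨{z | Relation.ReflTransGen Dx y z ∧ Relation.ReflTransGen Dx z y}, ?_, ?_, ?_⟩
  · refine ⟨⟨y, Relation.ReflTransGen.refl, Relation.ReflTransGen.refl⟩, ?_, ?_⟩
    · rintro v ⟨hv1, hv2⟩ w ⟨hw1, hw2⟩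
      exact hv2.trans hw1
    · intro t hst hmut
      ext w
      constructor
      · intro hw
        exact ⟨hmut y (hst ⟨Relation.ReflTransGen.refl, Relation.ReflTransGen.refl⟩) w hw,
          hmut w hw y (hst ⟨Relation.ReflTransGen.refl, Relation.ReflTransGen.refl⟩)⟩
      · exact fun hw => hst hw
  · rintro a ha z ⟨hz1, hz2⟩ haz
    have hay : Relation.ReflTransGen Dx a y :=
      (Relation.ReflTransGen.single haz).trans hz2
    have haS : a ∈ {z | Relation.ReflTransGen Dx z x} := hay.trans hyS
    have hya : Relation.ReflTransGen Dx y a := by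
      by_contra hcon
      exact hymin a haS ⟨hay, hcon⟩
    exact ha ⟨hya, hay⟩
  · exact ⟨y, ⟨Relation.ReflTransGen.refl, Relation.ReflTransGen.refl⟩, hyS⟩

/-- Sufficiency: disjoint union of `k` digraphs (blocks `b`, edges of `Dx` within blocks)
with input heads `U` and some reachable vertex `v₀`.  If `N 0, …, N (q-1)` are the distinct
non-top-linked SCCs not reachable from the input, each lying in a block different from
that of some reachable vertex, and every other non-top-linked SCC is reachable, then
exactly `q` interconnection edges suffice to make every vertex reachable. -/
theorem stmt13 {X : Type*} [Fintype X] [DecidableEq X] {k q : ℕ}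
    (b : X → Fin k) (Dx : X → X → Prop)
    (hblock : ∀ x y, Dx x y → b x = b y)
    (U : Set X)
    (v₀ : X) (hv₀ : ∃ s ∈ U, Relation.ReflTransGen Dx s v₀)
    (N : Fin q → Set X)
    (hSCC : ∀ j, IsSCC Dx (N j))
    (hNTL : ∀ j, ∀ x ∉ N j, ∀ y ∈ N j, ¬ Dx x y)
    (hinacc : ∀ j, ∀ y ∈ N j, ¬ ∃ s ∈ U, Relation.ReflTransGen Dx s y)
    (hinj : Function.Injective N)
    (hcross : ∀ j, ∃ v : X, (∃ s ∈ U, Relation.ReflTransGen Dx s v) ∧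
      ∀ x ∈ N j, b v ≠ b x)
    (hcomplete : ∀ s : Set X, IsSCC Dx s → (∀ x ∉ s, ∀ y ∈ s, ¬ Dx x y) →
      (∃ j, s = N j) ∨ ∃ y ∈ s, ∃ t ∈ U, Relation.ReflTransGen Dx t y) :
    ∃ I : Finset (X × X),
      (∀ e ∈ I, b (e : X × X).1 ≠ b (e : X × X).2) ∧ I.card = q ∧
      ∀ x : X, ∃ s ∈ U,
        Relation.ReflTransGen (fun a c => Dx a c ∨ (a, c) ∈ I) s x := by
  classical
  choose v hvreach hvb using hcross
  choose n hn using fun j => (hSCC j).1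
  refine ⟨Finset.univ.image (fun j : Fin q => (v j, n j)), ?_, ?_, ?_⟩
  · intro e he
    simp only [Finset.mem_image, Finset.mem_univ, true_and] at he
    obtain ⟨j, rfl⟩ := he
    exact hvb j (n j) (hn j)
  · rw [Finset.card_image_of_injective _ ?_, Finset.card_univ, Fintype.card_fin]
    intro i j hij
    have hnij : n i = n j := congrArg Prod.snd hij
    exact hinj ((hSCC i).eq_of_mem (hSCC j) (hn i) (hnij ▸ hn j))
  · intro x
    set D' : X → X → Prop := fun a c => Dx a c ∨
      (a, c) ∈ Finset.univ.image (fun j : Fin q => (v j, n j)) with hD'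
    have hmono : ∀ {a c}, Relation.ReflTransGen Dx a c → Relation.ReflTransGen D' a c :=
      fun h => Relation.ReflTransGen.mono (p := D') (fun a c h => Or.inl h) _ _ h
    obtain ⟨s, hsSCC, hsNTL, z, hzs, hzx⟩ := exists_source Dx x
    rcases hcomplete s hsSCC hsNTL with ⟨j, rfl⟩ | ⟨y, hys, t, htU, hty⟩
    · obtain ⟨u, huU, huv⟩ := hvreach j
      refine ⟨u, huU, ?_⟩
      have hedge : Relation.ReflTransGen D' (v j) (n j) :=
        Relation.ReflTransGen.single (Or.inr (by simp; exact ⟨j, rfl, rfl⟩))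
      have hnz : Relation.ReflTransGen Dx (n j) z := hsSCC.2.1 _ (hn j) _ hzs
      exact ((hmono huv).trans hedge).trans (hmono (hnz.trans hzx))
    · refine ⟨t, htU, hmono (hty.trans ((hsSCC.2.1 _ hys _ hzs).trans hzx))⟩
end
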